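/- Let {F_{a|ω_x}} be Hermitian teleportation-witness operators on H_B and let w = Σ_{a,x} tr[F_{a|ω_x} σ_{a|ω_x}] be its value on a teleportation assemblage arising from a shared state ρ^{AB}, a POVM {M_a^{VA}} and input states {ω_x}. Define f(w) as the optimal value of: minimize tr[ρ_−] over positive semidefinite operators M*_{a,±} on V ⊗ H_B and Hermitian operators ρ_± on H_B, subject to w = Σ_{a,x} tr[(ω_x ⊗ F_{a|ω_x})(M*_{a,+} − M*_{a,−})] and Σ_a M*_{a,±} = 1_V ⊗ ρ_±. Then f(w) ≤ N(ρ^{AB}). -/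

import Mathlib

set_option linter.unusedSectionVars false
set_option maxHeartbeats 1000000


open Matrix ComplexOrder
open scoped Kronecker

namespace Tele

noncomputable def ptrace₁ {V B : Type*} [Fintype V]
    (M : Matrix (V × B) (V × B) ℂ) : Matrix B B ℂ :=
  Matrix.of fun b b' => ∑ v, M (v, b) (v, b')

noncomputable def ptrace₂ {V B : Type*} [Fintype B]
    (M : Matrix (V × B) (V × B) ℂ) : Matrix V V ℂ :=
  Matrix.of fun v v' => ∑ b, M (v, b) (v', b)

noncomputable def ptraceMid {V A B : Type*} [Fintype A]
    (M : Matrix (V × A × B) (V × A × B) ℂ) : Matrix (V × B) (V × B) ℂ :=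
  Matrix.of fun p q => ∑ a, M (p.1, a, p.2) (q.1, a, q.2)

noncomputable def ptraceVA {V A B : Type*} [Fintype V] [Fintype A]
    (M : Matrix (V × A × B) (V × A × B) ℂ) : Matrix B B ℂ :=
  Matrix.of fun b b' => ∑ v, ∑ a, M (v, a, b) (v, a, b')

noncomputable def ptraceV₁A {V V₁ A B : Type*} [Fintype V₁] [Fintype A]
    (M : Matrix (V × V₁ × A × B) (V × V₁ × A × B) ℂ) : Matrix (V × B) (V × B) ℂ :=
  Matrix.of fun p q => ∑ v₁, ∑ a, M (p.1, v₁, a, p.2) (q.1, v₁, a, q.2)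

def ptranspose₁ {V B : Type*} (M : Matrix (V × B) (V × B) ℂ) : Matrix (V × B) (V × B) ℂ :=
  Matrix.of fun p q => M (q.1, p.2) (p.1, q.2)

def ptranspose₂ {V B : Type*} (M : Matrix (V × B) (V × B) ℂ) : Matrix (V × B) (V × B) ℂ :=
  Matrix.of fun p q => M (p.1, q.2) (q.1, p.2)

def Separable {V B : Type*} [Fintype V] [Fintype B]
    (M : Matrix (V × B) (V × B) ℂ) : Prop :=
  ∃ (n : ℕ) (τ : Fin n → Matrix V V ℂ) (χ : Fin n → Matrix B B ℂ),
    (∀ i, (τ i).PosSemidef) ∧ (∀ i, (χ i).PosSemidef) ∧ M = ∑ i, τ i ⊗ₖ χ i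

def IsState {V : Type*} [Fintype V] (ρ : Matrix V V ℂ) : Prop :=
  ρ.PosSemidef ∧ ρ.trace = 1

noncomputable def maxEnt (d : ℕ) : Matrix (Fin d × Fin d) (Fin d × Fin d) ℂ :=
  Matrix.of fun p q => if p.1 = p.2 ∧ q.1 = q.2 then (d : ℂ)⁻¹ else 0

noncomputable def chanOp {V A B : Type*} [Fintype V] [Fintype A] [Fintype B]
    [DecidableEq V] [DecidableEq B]
    (M : Matrix (V × A) (V × A) ℂ) (ρ : Matrix (A × B) (A × B) ℂ) :
    Matrix (V × B) (V × B) ℂ :=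
  ptraceMid ((Matrix.reindex (Equiv.prodAssoc V A B) (Equiv.prodAssoc V A B)
      (M ⊗ₖ (1 : Matrix B B ℂ))) * ((1 : Matrix V V ℂ) ⊗ₖ ρ))

noncomputable def teleA {V A B : Type*} [Fintype V] [Fintype A] [Fintype B] [DecidableEq B]
    (M : Matrix (V × A) (V × A) ℂ) (ρ : Matrix (A × B) (A × B) ℂ) (ω : Matrix V V ℂ) :
    Matrix B B ℂ :=
  ptraceVA ((Matrix.reindex (Equiv.prodAssoc V A B) (Equiv.prodAssoc V A B)
      (M ⊗ₖ (1 : Matrix B B ℂ))) * (ω ⊗ₖ ρ))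

noncomputable def margOp {V A : Type*} [Fintype V] [Fintype A] [DecidableEq V]
    (M : Matrix (V × A) (V × A) ℂ) (ρA : Matrix A A ℂ) : Matrix V V ℂ :=
  ptrace₂ (M * ((1 : Matrix V V ℂ) ⊗ₖ ρA))

noncomputable def piOp {A B : Type*} [Fintype A] [Fintype B] [DecidableEq B]
    (χ : Matrix A A ℂ) (ρ : Matrix (A × B) (A × B) ℂ) : Matrix B B ℂ :=
  ptrace₁ ((χ ⊗ₖ (1 : Matrix B B ℂ)) * ρ)

def TomoComplete {V X : Type*} [Fintype V] (ω : X → Matrix V V ℂ) : Prop :=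
  ∀ H : Matrix V V ℂ, H.IsHermitian → H ∈ Submodule.span ℝ (Set.range ω)

noncomputable def shiftX (d : ℕ) : Matrix (Fin d) (Fin d) ℂ :=
  Matrix.of fun i j => if (i : ℕ) = ((j : ℕ) + 1) % d then 1 else 0

noncomputable def clockZ (d : ℕ) : Matrix (Fin d) (Fin d) ℂ :=
  Matrix.of fun i j =>
    if i = j then Complex.exp (2 * (Real.pi : ℂ) * Complex.I * ((i : ℕ) : ℂ) / (d : ℂ)) else 0

noncomputable def HW (d : ℕ) (a : Fin d × Fin d) : Matrix (Fin d) (Fin d) ℂ :=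
  shiftX d ^ (a.1 : ℕ) * clockZ d ^ (a.2 : ℕ)

noncomputable def bellPOVM (d : ℕ) (a : Fin d × Fin d) :
    Matrix (Fin d × Fin d) (Fin d × Fin d) ℂ :=
  (HW d a ⊗ₖ (1 : Matrix (Fin d) (Fin d) ℂ)) * maxEnt d *
    ((HW d a)ᴴ ⊗ₖ (1 : Matrix (Fin d) (Fin d) ℂ))

noncomputable def negativity {A B : Type*} [Fintype A] [Fintype B]
    (ρ : Matrix (A × B) (A × B) ℂ) : ℝ :=
  sInf {t : ℝ | ∃ ρp ρm : Matrix (A × B) (A × B) ℂ,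
    ρ = ρp - ρm ∧ (ptranspose₁ ρp).PosSemidef ∧ (ptranspose₁ ρm).PosSemidef ∧
    t = (ρm.trace).re}

noncomputable def epsGen {A B : Type*} [Fintype A] [Fintype B]
    (ρ : Matrix (A × B) (A × B) ℂ) : ℝ :=
  sInf {r : ℝ | 0 ≤ r ∧ ∃ ρs : Matrix (A × B) (A × B) ℂ, IsState ρs ∧
    Separable ((((1 + r : ℝ) : ℂ))⁻¹ • (ρ + ((r : ℝ) : ℂ) • ρs))}

noncomputable def epsSep {A B : Type*} [Fintype A] [Fintype B]
    (ρ : Matrix (A × B) (A × B) ℂ) : ℝ :=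
  sInf {r : ℝ | 0 ≤ r ∧ ∃ ρs : Matrix (A × B) (A × B) ℂ, IsState ρs ∧ Separable ρs ∧
    Separable ((((1 + r : ℝ) : ℂ))⁻¹ • (ρ + ((r : ℝ) : ℂ) • ρs))}

noncomputable def epsR {A B : Type*} [Fintype A] [Fintype B] [DecidableEq A] [DecidableEq B]
    (ρ : Matrix (A × B) (A × B) ℂ) : ℝ :=
  sInf {r : ℝ | 0 ≤ r ∧
    Separable ((((1 + r : ℝ) : ℂ))⁻¹ •
      (ρ + ((r : ℝ) : ℂ) • ((Fintype.card (A × B) : ℂ)⁻¹ • (1 : Matrix (A × B) (A × B) ℂ))))}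

noncomputable def epsBSA {A B : Type*} [Fintype A] [Fintype B]
    (ρ : Matrix (A × B) (A × B) ℂ) : ℝ :=
  sInf {p : ℝ | 0 ≤ p ∧ p ≤ 1 ∧ ∃ ρs σS : Matrix (A × B) (A × B) ℂ,
    IsState ρs ∧ IsState σS ∧ Separable σS ∧
    ρ = ((p : ℝ) : ℂ) • ρs + (((1 - p : ℝ)) : ℂ) • σS}

noncomputable def tauGen {V B X ι : Type*} [Fintype V] [Fintype B] [Fintype ι]
    [DecidableEq V] [DecidableEq B]
    (ω : X → Matrix V V ℂ) (σ : ι → X → Matrix B B ℂ) : ℝ :=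
  sInf {r : ℝ | 0 ≤ r ∧ ∃ (m : ℕ) (ρs : Matrix (Fin m × B) (Fin m × B) ℂ)
      (N : ι → Matrix (V × Fin m) (V × Fin m) ℂ) (Ms : ι → Matrix (V × B) (V × B) ℂ),
      IsState ρs ∧ (∀ a, (N a).PosSemidef) ∧ ((∑ a, N a) = 1) ∧
      (∀ a, (Ms a).PosSemidef ∧ Separable (Ms a)) ∧
      (∀ a x, (((1 + r : ℝ) : ℂ))⁻¹ • (σ a x + ((r : ℝ) : ℂ) • teleA (N a) ρs (ω x)) =
        ptrace₁ (Ms a * (ω x ⊗ₖ (1 : Matrix B B ℂ)))) ∧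
      (∀ x, (∑ a, Ms a) = (1 : Matrix V V ℂ) ⊗ₖ
        ((((1 + r : ℝ) : ℂ))⁻¹ •
          ((∑ a, σ a x) + ((r : ℝ) : ℂ) • ∑ a, teleA (N a) ρs (ω x))))}

noncomputable def tauCl {V B X ι : Type*} [Fintype V] [Fintype B] [Fintype ι]
    [DecidableEq V] [DecidableEq B]
    (ω : X → Matrix V V ℂ) (σ : ι → X → Matrix B B ℂ) : ℝ :=
  sInf {r : ℝ | 0 ≤ r ∧ ∃ (Mb Ms : ι → Matrix (V × B) (V × B) ℂ),
    (∀ a, (Mb a).PosSemidef ∧ Separable (Mb a)) ∧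
    (∀ a, (Ms a).PosSemidef ∧ Separable (Ms a)) ∧
    (∀ x, (∑ a, Mb a) = (1 : Matrix V V ℂ) ⊗ₖ
      (∑ a, ptrace₁ (Mb a * (ω x ⊗ₖ (1 : Matrix B B ℂ))))) ∧
    (∀ a x, (((1 + r : ℝ) : ℂ))⁻¹ •
        (σ a x + ((r : ℝ) : ℂ) • ptrace₁ (Mb a * (ω x ⊗ₖ (1 : Matrix B B ℂ)))) =
      ptrace₁ (Ms a * (ω x ⊗ₖ (1 : Matrix B B ℂ)))) ∧
    (∀ x, (∑ a, Ms a) = (1 : Matrix V V ℂ) ⊗ₖ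
      ((((1 + r : ℝ) : ℂ))⁻¹ •
        ((∑ a, σ a x) + ((r : ℝ) : ℂ) •
          ∑ a, ptrace₁ (Mb a * (ω x ⊗ₖ (1 : Matrix B B ℂ))))))}

noncomputable def tauR {V B X ι : Type*} [Fintype V] [Fintype B] [Fintype ι]
    [DecidableEq V] [DecidableEq B]
    (ω : X → Matrix V V ℂ) (σ : ι → X → Matrix B B ℂ) : ℝ :=
  sInf {r : ℝ | 0 ≤ r ∧ ∃ (p : ι → ℝ) (Ms : ι → Matrix (V × B) (V × B) ℂ),
    (∀ a, 0 ≤ p a) ∧ ((∑ a, p a) = 1) ∧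
    (∀ a, (Ms a).PosSemidef ∧ Separable (Ms a)) ∧
    (∀ a x, (((1 + r : ℝ) : ℂ))⁻¹ •
        (σ a x + ((r * p a : ℝ) : ℂ) • ((Fintype.card B : ℂ)⁻¹ • (1 : Matrix B B ℂ))) =
      ptrace₁ (Ms a * (ω x ⊗ₖ (1 : Matrix B B ℂ)))) ∧
    (∀ x, (∑ a, Ms a) = (1 : Matrix V V ℂ) ⊗ₖ
      ((((1 + r : ℝ) : ℂ))⁻¹ •
        ((∑ a, σ a x) + ((r : ℝ) : ℂ) • ((Fintype.card B : ℂ)⁻¹ • (1 : Matrix B B ℂ)))))}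

noncomputable def TW {V B X ι : Type*} [Fintype V] [Fintype B] [Fintype ι]
    [DecidableEq B]
    (ω : X → Matrix V V ℂ) (σ : ι → X → Matrix B B ℂ) : ℝ :=
  sInf {p : ℝ | 0 ≤ p ∧ p ≤ 1 ∧ ∃ (Mt Mb : ι → Matrix (V × B) (V × B) ℂ),
    (∀ a, (Mb a).PosSemidef ∧ Separable (Mb a)) ∧
    (∀ a, (ptranspose₁ (Mt a)).PosSemidef) ∧
    (∀ x x', (∑ a, ptrace₁ (Mt a * (ω x ⊗ₖ (1 : Matrix B B ℂ)))) =
      ∑ a, ptrace₁ (Mt a * (ω x' ⊗ₖ (1 : Matrix B B ℂ)))) ∧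
    (∀ a x, σ a x = ptrace₁
      ((((p : ℝ) : ℂ) • Mt a + (((1 - p : ℝ)) : ℂ) • Mb a) * (ω x ⊗ₖ (1 : Matrix B B ℂ))))}


section Aux
variable {V A B : Type*} [Fintype V] [Fintype A] [Fintype B] [DecidableEq V] [DecidableEq A] [DecidableEq B]

noncomputable def comb (M : Matrix (V × A) (V × A) ℂ) (σ : Matrix (A × B) (A × B) ℂ) :
    Matrix (V × B) (V × B) ℂ :=
  Matrix.of fun p q => ∑ a, ∑ a', M (p.1, a) (q.1, a') * σ (a, p.2) (a', q.2)

noncomputable def Ecomp (V A B : Type*) [DecidableEq V] [DecidableEq A] [DecidableEq B] :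
    Matrix ((V × A) × (A × B)) (V × B) ℂ :=
  Matrix.of fun r p =>
    (if r.1.1 = p.1 then 1 else 0) * (if r.1.2 = r.2.1 then 1 else 0) *
      (if r.2.2 = p.2 then 1 else 0)

lemma comb_eq_compress (M : Matrix (V × A) (V × A) ℂ) (σ : Matrix (A × B) (A × B) ℂ) :
    comb M σ = (Ecomp V A B)ᴴ * (M ⊗ₖ σ) * (Ecomp V A B) := by
  ext p q
  simp only [comb, Ecomp, Matrix.mul_apply, Matrix.conjTranspose_apply, Matrix.of_apply,
    kroneckerMap_apply, Fintype.sum_prod_type, star_mul', apply_ite (star : ℂ → ℂ), star_one, star_zero,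
    ite_mul, mul_ite, mul_one, mul_zero, zero_mul, one_mul,
    Finset.sum_ite_eq, Finset.sum_ite_eq', Finset.mem_univ, if_true]
  conv_rhs => rw [Finset.sum_comm]
  simp only [Finset.sum_ite_eq', Finset.mem_univ, if_true]
  rw [Finset.sum_comm]
  refine Finset.sum_congr rfl fun a' _ => ?_
  conv_rhs => rw [Finset.sum_comm]
  simp only [Finset.sum_ite_eq', Finset.mem_univ, if_true]

lemma kronecker_posSemidef {M : Matrix (V × A) (V × A) ℂ} {σ : Matrix (A × B) (A × B) ℂ}
    (hM : M.PosSemidef) (hσ : σ.PosSemidef) : (M ⊗ₖ σ).PosSemidef := by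
  exact hM.kronecker hσ

lemma comb_posSemidef {M : Matrix (V × A) (V × A) ℂ} {σ : Matrix (A × B) (A × B) ℂ}
    (hM : M.PosSemidef) (hσ : σ.PosSemidef) : (comb M σ).PosSemidef := by
  rw [comb_eq_compress]
  exact (kronecker_posSemidef hM hσ).conjTranspose_mul_mul_same _


lemma comb_one (σ : Matrix (A × B) (A × B) ℂ) :
    comb (1 : Matrix (V × A) (V × A) ℂ) σ = (1 : Matrix V V ℂ) ⊗ₖ ptrace₁ σ := by
  ext p q
  simp only [comb, Matrix.of_apply, Matrix.one_apply, kroneckerMap_apply, ptrace₁,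
    Prod.mk.injEq, ite_mul, one_mul, zero_mul, Finset.sum_ite_eq, Finset.mem_univ, if_true]
  by_cases h : p.1 = q.1 <;>
    simp [h, Finset.sum_ite_eq, Finset.sum_ite_eq', ite_and]

lemma sum_comb {ι : Type*} [Fintype ι] (M : ι → Matrix (V × A) (V × A) ℂ)
    (σ : Matrix (A × B) (A × B) ℂ) :
    ∑ i, comb (M i) σ = comb (∑ i, M i) σ := by
  ext p q
  simp only [Matrix.sum_apply, comb, Matrix.of_apply, Finset.sum_mul]
  rw [Finset.sum_comm]
  refine Finset.sum_congr rfl fun a _ => ?_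
  rw [Finset.sum_comm]

lemma comb_sub (M : Matrix (V × A) (V × A) ℂ) (σ₁ σ₂ : Matrix (A × B) (A × B) ℂ) :
    comb M (σ₁ - σ₂) = comb M σ₁ - comb M σ₂ := by
  ext p q
  simp [comb, mul_sub, Finset.sum_sub_distrib]

lemma trace_comb (M : Matrix (V × A) (V × A) ℂ) (ρ' : Matrix (A × B) (A × B) ℂ)
    (ω : Matrix V V ℂ) (F : Matrix B B ℂ) :
    ((ω ⊗ₖ F) * comb M (ptranspose₁ ρ')).trace = (F * teleA M ρ' ω).trace := by
  simp only [Matrix.trace, Matrix.diag, Matrix.mul_apply, comb, teleA, ptraceVA, ptranspose₁,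
    Matrix.of_apply, kroneckerMap_apply, Matrix.reindex_apply, Matrix.submatrix_apply,
    Equiv.prodAssoc_symm_apply, Matrix.one_apply, Fintype.sum_prod_type,
    Finset.sum_mul, Finset.mul_sum, mul_ite, ite_mul, mul_one, mul_zero, one_mul, zero_mul,
    Finset.sum_ite_eq, Finset.sum_ite_eq', Finset.mem_univ, if_true]
  rw [Finset.sum_comm]
  conv_lhs => enter [2, a]; rw [Finset.sum_comm]
  conv_lhs => enter [2, a, 2, b]; rw [Finset.sum_comm]
  conv_lhs => enter [2, a, 2, b, 2, c]; rw [Finset.sum_comm]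
  conv_lhs => enter [2, a]; rw [Finset.sum_comm]
  exact Finset.sum_congr rfl fun _ _ => Finset.sum_congr rfl fun _ _ =>
    Finset.sum_congr rfl fun _ _ => Finset.sum_congr rfl fun _ _ =>
    Finset.sum_congr rfl fun _ _ => Finset.sum_congr rfl fun _ _ => by ring

lemma ptranspose₁_ptranspose₁ (M : Matrix (V × B) (V × B) ℂ) :
    ptranspose₁ (ptranspose₁ M) = M := rfl

lemma ptranspose₁_sub (M N : Matrix (V × B) (V × B) ℂ) :
    ptranspose₁ (M - N) = ptranspose₁ M - ptranspose₁ N := rfl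

lemma ptranspose₁_isHermitian {M : Matrix (V × B) (V × B) ℂ} (h : M.IsHermitian) :
    (ptranspose₁ M).IsHermitian := by
  ext p q
  have := congrFun (congrFun h (q.1, p.2)) (p.1, q.2)
  simpa [ptranspose₁, Matrix.conjTranspose_apply] using this

lemma ptrace₁_isHermitian {M : Matrix (A × B) (A × B) ℂ} (h : M.IsHermitian) :
    (ptrace₁ M).IsHermitian := by
  ext b b'
  simp only [ptrace₁, Matrix.conjTranspose_apply, Matrix.of_apply, star_sum]
  refine Finset.sum_congr rfl fun a _ => ?_
  simpa [Matrix.conjTranspose_apply] using congrFun (congrFun h (a, b)) (a, b')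

lemma ptrace₁_ptranspose₁ (M : Matrix (A × B) (A × B) ℂ) :
    ptrace₁ (ptranspose₁ M) = ptrace₁ M := rfl

lemma trace_ptrace₁ (M : Matrix (A × B) (A × B) ℂ) :
    (ptrace₁ M).trace = M.trace := by
  simp only [Matrix.trace, Matrix.diag, ptrace₁, Matrix.of_apply, Fintype.sum_prod_type]
  exact Finset.sum_comm

lemma posSemidef_sum {ι : Type*} [Fintype ι] {M : ι → Matrix (V × B) (V × B) ℂ}
    (h : ∀ i, (M i).PosSemidef) : (∑ i, M i).PosSemidef := by
  classical
  refine Finset.sum_induction M Matrix.PosSemidef (fun _ _ ha hb => ha.add hb)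
    Matrix.PosSemidef.zero fun i _ => h i

lemma psd_diag_nonneg {n : Type*} [Fintype n] [DecidableEq n] {N : Matrix n n ℂ}
    (h : N.PosSemidef) (i : n) : 0 ≤ N i i := by
  exact h.diag_nonneg

end Aux

/-- the negativity bound f(w) from the violation w of a nonclassical
teleportation witness lower bounds the entanglement negativity of the shared state. -/
theorem negativity_from_witness {A B ι X : Type*}
    [Fintype A] [Fintype B] [Fintype ι] [Fintype X] [DecidableEq A] [DecidableEq B]
    (d : ℕ) (hd : 1 ≤ d)
    (ρ : Matrix (A × B) (A × B) ℂ) (hρ : IsState ρ)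
    (M : ι → Matrix (Fin d × A) (Fin d × A) ℂ)
    (hM : ∀ a, (M a).PosSemidef) (hMsum : (∑ a, M a) = 1)
    (ω : X → Matrix (Fin d) (Fin d) ℂ) (hω : ∀ x, IsState (ω x))
    (F : ι → X → Matrix B B ℂ) (hF : ∀ a x, (F a x).IsHermitian)
    (w : ℝ)
    (hw : w = (∑ a, ∑ x, (F a x * teleA (M a) ρ (ω x)).trace).re) :
    sInf {t : ℝ | ∃ (Mp Mm : ι → Matrix (Fin d × B) (Fin d × B) ℂ) (ρp ρm : Matrix B B ℂ),
        (∀ a, (Mp a).PosSemidef) ∧ (∀ a, (Mm a).PosSemidef) ∧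
        ρp.IsHermitian ∧ ρm.IsHermitian ∧
        w = (∑ a, ∑ x, ((ω x ⊗ₖ F a x) * (Mp a - Mm a)).trace).re ∧
        (∑ a, Mp a) = (1 : Matrix (Fin d) (Fin d) ℂ) ⊗ₖ ρp ∧
        (∑ a, Mm a) = (1 : Matrix (Fin d) (Fin d) ℂ) ⊗ₖ ρm ∧
        t = (ρm.trace).re} ≤ negativity ρ := by
  rw [negativity]
  refine csInf_le_csInf ?_ ?_ ?_
  · -- bounded below by 0
    refine ⟨0, fun t ht => ?_⟩
    obtain ⟨Mp, Mm, ρp, ρm, _, hQ, _, _, _, _, hsm, ht⟩ := ht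
    have hpsd : ((1 : Matrix (Fin d) (Fin d) ℂ) ⊗ₖ ρm).PosSemidef := hsm ▸ posSemidef_sum hQ
    have v0 : Fin d := ⟨0, hd⟩
    have hdiag : ∀ b, 0 ≤ ρm b b := by
      intro b
      have := psd_diag_nonneg hpsd (v0, b)
      simpa [Matrix.kroneckerMap_apply, Matrix.one_apply_eq] using this
    rw [ht, Matrix.trace, Complex.re_sum]
    exact Finset.sum_nonneg fun b _ => by
      simpa [Matrix.diag] using (Complex.le_def.mp (hdiag b)).1
  · -- nonempty
    have hH : (ptranspose₁ ρ).IsHermitian := ptranspose₁_isHermitian hρ.1.1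
    set U : Matrix (A × B) (A × B) ℂ := (hH.eigenvectorUnitary : Matrix (A × B) (A × B) ℂ)
      with hU
    set ev := hH.eigenvalues with hev
    set Dp : Matrix (A × B) (A × B) ℂ :=
      Matrix.diagonal fun i => ((max (ev i) 0 : ℝ) : ℂ) with hDpdef
    set Dm : Matrix (A × B) (A × B) ℂ :=
      Matrix.diagonal fun i => ((max (-ev i) 0 : ℝ) : ℂ) with hDmdef
    have hDp : Dp.PosSemidef :=
      Matrix.posSemidef_diagonal_iff.mpr fun i => Complex.zero_le_real.mpr (le_max_right _ _)
    have hDm : Dm.PosSemidef :=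
      Matrix.posSemidef_diagonal_iff.mpr fun i => Complex.zero_le_real.mpr (le_max_right _ _)
    have hP : (U * Dp * Uᴴ).PosSemidef := hDp.mul_mul_conjTranspose_same U
    have hN : (U * Dm * Uᴴ).PosSemidef := hDm.mul_mul_conjTranspose_same U
    have hPN : U * Dp * Uᴴ - U * Dm * Uᴴ = ptranspose₁ ρ := by
      have hs := hH.spectral_theorem
      rw [Unitary.conjStarAlgAut_apply, Matrix.star_eq_conjTranspose] at hs
      have hDiff : Dp - Dm = Matrix.diagonal (RCLike.ofReal ∘ ev) := by
        rw [hDpdef, hDmdef, Matrix.diagonal_sub]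
        refine congrArg Matrix.diagonal (funext fun i => ?_)
        simp only [Function.comp_apply, Pi.sub_apply]
        rw [← Complex.ofReal_sub, max_zero_sub_max_neg_zero_eq_self]
        rfl
      calc U * Dp * Uᴴ - U * Dm * Uᴴ = U * (Dp - Dm) * Uᴴ := by
            rw [Matrix.mul_sub, Matrix.sub_mul]
        _ = ptranspose₁ ρ := by rw [hDiff, ← hs]
    refine ⟨((ptranspose₁ (U * Dm * Uᴴ)).trace).re,
      ptranspose₁ (U * Dp * Uᴴ), ptranspose₁ (U * Dm * Uᴴ), ?_, ?_, ?_, rfl⟩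
    · rw [← ptranspose₁_sub, hPN, ptranspose₁_ptranspose₁]
    · rw [ptranspose₁_ptranspose₁]; exact hP
    · rw [ptranspose₁_ptranspose₁]; exact hN
  · -- inclusion
    rintro t ⟨ρp, ρm, hde, hpp, hpm, ht⟩
    refine ⟨fun a => comb (M a) (ptranspose₁ ρp), fun a => comb (M a) (ptranspose₁ ρm),
      ptrace₁ ρp, ptrace₁ ρm,
      fun a => comb_posSemidef (hM a) hpp, fun a => comb_posSemidef (hM a) hpm, ?_, ?_, ?_, ?_, ?_, ?_⟩
    · exact ptrace₁_isHermitian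
        (by simpa [ptranspose₁_ptranspose₁] using ptranspose₁_isHermitian hpp.1)
    · exact ptrace₁_isHermitian
        (by simpa [ptranspose₁_ptranspose₁] using ptranspose₁_isHermitian hpm.1)
    · have key : ∀ a x,
          ((ω x ⊗ₖ F a x) * (comb (M a) (ptranspose₁ ρp) - comb (M a) (ptranspose₁ ρm))).trace
            = (F a x * teleA (M a) ρ (ω x)).trace := by
        intro a x
        rw [← comb_sub, ← ptranspose₁_sub, ← hde, trace_comb]
      rw [hw]
      congr 1
      exact (Finset.sum_congr rfl fun a _ => Finset.sum_congr rfl fun x _ => (key a x).symm)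
    · rw [sum_comb, hMsum, comb_one, ptrace₁_ptranspose₁]
    · rw [sum_comb, hMsum, comb_one, ptrace₁_ptranspose₁]
    · rw [trace_ptrace₁]; exact ht

end Tele
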